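/- Let θ ∈ (0, π/2) and let A, B, C, D ∈ ℝ³ be such that A, B, D are affinely independent, C does not lie in the plane Π spanned by A, B, D, the points B, C, D are pairwise distinct, A ≠ C, the angle ∠(D A B) is at most π − θ, and the distance from C to Π is at least sin θ · dist(A, C). If moreover φ := ∠(B C D) > π − θ, then θ ≤ 4·sin φ/sin θ + 2π − 2φ. -/

import Mathlib

open Real EuclideanGeometry


section Aux

variable {V : Type*} [NormedAddCommGroup V] [InnerProductSpace ℝ V]

local notation "⟪" x ", " y "⟫" => @inner ℝ _ _ x y

lemma proj_norm_eq (x : V) {y : V} (hy : y ≠ 0) :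
    ‖x - (⟪y, x⟫ / ‖y‖ ^ 2) • y‖ = Real.sin (InnerProductGeometry.angle y x) * ‖x‖ := by
  have hyn : (0:ℝ) < ‖y‖ := norm_pos_iff.2 hy
  have hyn' : (‖y‖ : ℝ) ≠ 0 := ne_of_gt hyn
  have key := InnerProductGeometry.sin_angle_mul_norm_mul_norm y x
  have hsq : (‖x - (⟪y, x⟫ / ‖y‖ ^ 2) • y‖ * ‖y‖) ^ 2 =
      ⟪y, y⟫ * ⟪x, x⟫ - ⟪y, x⟫ * ⟪y, x⟫ := by
    have h1 : ‖x - (⟪y, x⟫ / ‖y‖ ^ 2) • y‖ ^ 2 =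
        ‖x‖ ^ 2 - 2 * ((⟪y, x⟫ / ‖y‖ ^ 2) * ⟪x, y⟫) + (⟪y, x⟫ / ‖y‖ ^ 2) ^ 2 * ‖y‖ ^ 2 := by
      rw [@norm_sub_sq_real, real_inner_smul_right, norm_smul, Real.norm_eq_abs, mul_pow, sq_abs]
    have hyy : ⟪y, y⟫ = ‖y‖ ^ 2 := real_inner_self_eq_norm_sq y
    have hxx : ⟪x, x⟫ = ‖x‖ ^ 2 := real_inner_self_eq_norm_sq x
    have hxy : ⟪x, y⟫ = ⟪y, x⟫ := real_inner_comm y x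
    rw [mul_pow, h1, hyy, hxx, hxy]
    field_simp
    ring
  have hnn : (0:ℝ) ≤ ⟪y, y⟫ * ⟪x, x⟫ - ⟪y, x⟫ * ⟪y, x⟫ := by
    rw [← hsq]; positivity
  have h2 : ‖x - (⟪y, x⟫ / ‖y‖ ^ 2) • y‖ * ‖y‖ =
      Real.sin (InnerProductGeometry.angle y x) * ‖x‖ * ‖y‖ := by
    rw [show Real.sin (InnerProductGeometry.angle y x) * ‖x‖ * ‖y‖
        = Real.sin (InnerProductGeometry.angle y x) * (‖y‖ * ‖x‖) by ring, key,
      ← Real.sqrt_sq (mul_nonneg (norm_nonneg _) (norm_nonneg _)), hsq]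
  exact mul_right_cancel₀ hyn' h2

lemma sin_angle_mul_norm_le (x y : V) :
    Real.sin (InnerProductGeometry.angle y x) * ‖x‖ ≤ ‖x - y‖ := by
  by_cases hy : y = 0
  · simp [hy, InnerProductGeometry.angle_zero_left]
  have hyn : (0:ℝ) < ‖y‖ := norm_pos_iff.2 hy
  have key := InnerProductGeometry.sin_angle_mul_norm_mul_norm y x
  have hyy : ⟪y, y⟫ = ‖y‖ ^ 2 := real_inner_self_eq_norm_sq y
  have hxx : ⟪x, x⟫ = ‖x‖ ^ 2 := real_inner_self_eq_norm_sq x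
  have e1 : ‖x - y‖ ^ 2 = ‖x‖ ^ 2 - 2 * ⟪y, x⟫ + ‖y‖ ^ 2 := by
    rw [@norm_sub_sq_real, real_inner_comm x y]
  have hsin : (0:ℝ) ≤ Real.sin (InnerProductGeometry.angle y x) :=
    Real.sin_nonneg_of_nonneg_of_le_pi (InnerProductGeometry.angle_nonneg y x)
      (InnerProductGeometry.angle_le_pi y x)
  have e2 : (Real.sin (InnerProductGeometry.angle y x) * (‖y‖ * ‖x‖)) ^ 2 =
      ⟪y, y⟫ * ⟪x, x⟫ - ⟪y, x⟫ * ⟪y, x⟫ := by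
    rw [key]
    refine Real.sq_sqrt ?_
    nlinarith [real_inner_mul_inner_self_le y x]
  have hineq : (Real.sin (InnerProductGeometry.angle y x) * ‖x‖) ^ 2 * ‖y‖ ^ 2
      ≤ ‖x - y‖ ^ 2 * ‖y‖ ^ 2 := by
    have h3 : (Real.sin (InnerProductGeometry.angle y x) * ‖x‖) ^ 2 * ‖y‖ ^ 2 =
        ⟪y, y⟫ * ⟪x, x⟫ - ⟪y, x⟫ * ⟪y, x⟫ := by rw [← e2]; ring
    rw [h3, e1, hyy, hxx]
    nlinarith [sq_nonneg ((⟪y, x⟫ : ℝ) - ‖y‖ ^ 2)]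
  have h4 : (Real.sin (InnerProductGeometry.angle y x) * ‖x‖) ^ 2 ≤ ‖x - y‖ ^ 2 :=
    le_of_mul_le_mul_right hineq (by positivity)
  calc Real.sin (InnerProductGeometry.angle y x) * ‖x‖
      = √((Real.sin (InnerProductGeometry.angle y x) * ‖x‖) ^ 2) :=
        (Real.sqrt_sq (by positivity)).symm
    _ ≤ √(‖x - y‖ ^ 2) := Real.sqrt_le_sqrt h4
    _ = ‖x - y‖ := Real.sqrt_sq (norm_nonneg _)

lemma angle_triangle_vec (x y z : V) :
    InnerProductGeometry.angle x z ≤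
      InnerProductGeometry.angle x y + InnerProductGeometry.angle y z := by
  by_cases hy : y = 0
  · subst hy
    simp only [InnerProductGeometry.angle_zero_left, InnerProductGeometry.angle_zero_right]
    linarith [InnerProductGeometry.angle_le_pi x z]
  by_cases hx : x = 0
  · subst hx
    simp only [InnerProductGeometry.angle_zero_left]
    linarith [InnerProductGeometry.angle_nonneg y z]
  by_cases hz : z = 0
  · subst hz
    simp only [InnerProductGeometry.angle_zero_right]
    linarith [InnerProductGeometry.angle_nonneg x y]
  set α := InnerProductGeometry.angle x y with hα
  set β := InnerProductGeometry.angle y z with hβ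
  rcases le_or_gt π (α + β) with h | h
  · exact (InnerProductGeometry.angle_le_pi x z).trans h
  have hxn : (0:ℝ) < ‖x‖ := norm_pos_iff.2 hx
  have hyn : (0:ℝ) < ‖y‖ := norm_pos_iff.2 hy
  have hzn : (0:ℝ) < ‖z‖ := norm_pos_iff.2 hz
  have hcos : Real.cos (α + β) * (‖x‖ * ‖z‖) ≤ ⟪x, z⟫ := by
    set t := (⟪y, x⟫ : ℝ) / ‖y‖ ^ 2 with ht
    set s := (⟪y, z⟫ : ℝ) / ‖y‖ ^ 2 with hs
    have hx' : ‖x - t • y‖ = Real.sin α * ‖x‖ := by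
      rw [ht, proj_norm_eq x hy, InnerProductGeometry.angle_comm y x, hα]
    have hz' : ‖z - s • y‖ = Real.sin β * ‖z‖ := by
      rw [hs, proj_norm_eq z hy, hβ]
    have hinner : ⟪x - t • y, z - s • y⟫ = ⟪x, z⟫ - ⟪y, x⟫ * ⟪y, z⟫ / ‖y‖ ^ 2 := by
      simp only [inner_sub_left, inner_sub_right, real_inner_smul_left, real_inner_smul_right,
        real_inner_self_eq_norm_sq]
      rw [real_inner_comm x y, ht, hs]
      field_simp
      ring
    have hCS : -(‖x - t • y‖ * ‖z - s • y‖) ≤ ⟪x - t • y, z - s • y⟫ := by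
      have h1 := abs_real_inner_le_norm (x - t • y) (z - s • y)
      cases' abs_le.mp h1 with h2 h3
      linarith
    have hca : (⟪y, x⟫ : ℝ) = Real.cos α * (‖x‖ * ‖y‖) := by
      rw [hα, InnerProductGeometry.cos_angle_mul_norm_mul_norm x y]
      exact real_inner_comm x y
    have hcb : (⟪y, z⟫ : ℝ) = Real.cos β * (‖y‖ * ‖z‖) := by
      rw [hβ, InnerProductGeometry.cos_angle_mul_norm_mul_norm y z]
    have hquot : (⟪y, x⟫ : ℝ) * ⟪y, z⟫ / ‖y‖ ^ 2 = Real.cos α * Real.cos β * (‖x‖ * ‖z‖) := by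
      rw [hca, hcb]; field_simp
    rw [Real.cos_add]
    rw [hx', hz', hinner, hquot] at hCS
    nlinarith [hCS]
  by_contra hcon
  push_neg at hcon
  have h0ab : (0:ℝ) ≤ α + β := by
    have h1 : (0:ℝ) ≤ α := by rw [hα]; exact InnerProductGeometry.angle_nonneg x y
    have h2 : (0:ℝ) ≤ β := by rw [hβ]; exact InnerProductGeometry.angle_nonneg y z
    linarith
  have hlt : Real.cos (InnerProductGeometry.angle x z) < Real.cos (α + β) :=
    Real.cos_lt_cos_of_nonneg_of_le_pi h0ab (InnerProductGeometry.angle_le_pi x z) hcon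
  have hc := InnerProductGeometry.cos_angle_mul_norm_mul_norm x z
  nlinarith [mul_pos hxn hzn, hcos, hlt, hc]

end Aux

section Points

local notation "⟪" x ", " y "⟫" => @inner ℝ _ _ x y

variable {V : Type*} [NormedAddCommGroup V] [InnerProductSpace ℝ V]

/-- `sin` of the angle at `b` times side `bc` is at most side `ac`. -/
lemma sin_angle_point (a b c : EuclideanSpace ℝ (Fin 3)) :
    Real.sin (∠ a b c) * dist b c ≤ dist a c := by
  have h := sin_angle_mul_norm_le (c - b) (a - b)
  have h1 : (c - b) - (a - b) = c - a := by abel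
  rw [h1] at h
  have h2 : ∠ a b c = InnerProductGeometry.angle (a - b) (c - b) := by
    unfold EuclideanGeometry.angle
    rw [vsub_eq_sub, vsub_eq_sub]
  have h3 : dist b c = ‖c - b‖ := by rw [dist_eq_norm, norm_sub_rev]
  have h4 : dist a c = ‖c - a‖ := by rw [dist_eq_norm, norm_sub_rev]
  rw [h2, h3, h4]
  exact h

/-- Triangle inequality for point angles at a common vertex. -/
lemma angle_point_triangle (p q r v : EuclideanSpace ℝ (Fin 3)) :
    ∠ p v r ≤ ∠ p v q + ∠ q v r := by
  have h1 : ∠ p v r = InnerProductGeometry.angle (p - v) (r - v) := by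
    unfold EuclideanGeometry.angle; rw [vsub_eq_sub, vsub_eq_sub]
  have h2 : ∠ p v q = InnerProductGeometry.angle (p - v) (q - v) := by
    unfold EuclideanGeometry.angle; rw [vsub_eq_sub, vsub_eq_sub]
  have h3 : ∠ q v r = InnerProductGeometry.angle (q - v) (r - v) := by
    unfold EuclideanGeometry.angle; rw [vsub_eq_sub, vsub_eq_sub]
  rw [h1, h2, h3]
  exact angle_triangle_vec (p - v) (q - v) (r - v)

/-- Distance from `c` to an affine subspace containing `b` and `d` is at most
`sin (∠ d b c) * dist b c`. -/
lemma infDist_le_sin_angle_mul (s : AffineSubspace ℝ (EuclideanSpace ℝ (Fin 3)))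
    {b d : EuclideanSpace ℝ (Fin 3)} (c : EuclideanSpace ℝ (Fin 3))
    (hb : b ∈ s) (hd : d ∈ s) (hbd : d ≠ b) :
    Metric.infDist c (s : Set (EuclideanSpace ℝ (Fin 3))) ≤ Real.sin (∠ d b c) * dist b c := by
  set t : ℝ := ⟪d - b, c - b⟫ / ‖d - b‖ ^ 2 with htdef
  have hP : t • (d -ᵥ b) +ᵥ b ∈ s := s.smul_vsub_vadd_mem t hd hb hb
  have h1 : Metric.infDist c (s : Set (EuclideanSpace ℝ (Fin 3)))
      ≤ dist c (t • (d -ᵥ b) +ᵥ b) := Metric.infDist_le_dist_of_mem hP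
  have h2 : dist c (t • (d -ᵥ b) +ᵥ b) = ‖(c - b) - t • (d - b)‖ := by
    rw [dist_eq_norm]
    congr 1
    rw [vsub_eq_sub, vadd_eq_add]
    abel
  have h3 : ‖(c - b) - t • (d - b)‖
      = Real.sin (InnerProductGeometry.angle (d - b) (c - b)) * ‖c - b‖ :=
    proj_norm_eq (c - b) (sub_ne_zero.2 hbd)
  have h4 : ∠ d b c = InnerProductGeometry.angle (d - b) (c - b) := by
    unfold EuclideanGeometry.angle
    rw [vsub_eq_sub, vsub_eq_sub]
  have h5 : dist b c = ‖c - b‖ := by rw [dist_eq_norm, norm_sub_rev]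
  rw [h4, h5, ← h3, ← h2]
  exact h1

end Points


set_option maxHeartbeats 4000000 in
theorem max_angle_key_inequality (θ : ℝ) (hθ : θ ∈ Set.Ioo 0 (π / 2))
    (A B C D : EuclideanSpace ℝ (Fin 3))
    (hABD : AffineIndependent ℝ ![A, B, D])
    (hC : C ∉ affineSpan ℝ ({A, B, D} : Set (EuclideanSpace ℝ (Fin 3))))
    (hBC : B ≠ C) (hCD : C ≠ D) (hBD : B ≠ D) (hAC : A ≠ C)
    (hDAB : ∠ D A B ≤ π - θ)
    (hdist : Real.sin θ * dist A C ≤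
      Metric.infDist C (affineSpan ℝ ({A, B, D} : Set (EuclideanSpace ℝ (Fin 3))) :
        Set (EuclideanSpace ℝ (Fin 3))))
    (hφ : π - θ < ∠ B C D) :
    θ ≤ 4 * Real.sin (∠ B C D) / Real.sin θ + 2 * π - 2 * ∠ B C D := by
  obtain ⟨hθ0, hθ2⟩ := hθ
  have hπ := Real.pi_pos
  have hinj := hABD.injective
  have hAB : A ≠ B := fun h => absurd (hinj (a₁ := 0) (a₂ := 1) (by simp [h])) (by decide)
  have hAD : A ≠ D := fun h => absurd (hinj (a₁ := 0) (a₂ := 2) (by simp [h])) (by decide)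
  have hAmem : A ∈ affineSpan ℝ ({A, B, D} : Set (EuclideanSpace ℝ (Fin 3))) :=
    subset_affineSpan ℝ _ (by simp)
  have hBmem : B ∈ affineSpan ℝ ({A, B, D} : Set (EuclideanSpace ℝ (Fin 3))) :=
    subset_affineSpan ℝ _ (by simp)
  have hDmem : D ∈ affineSpan ℝ ({A, B, D} : Set (EuclideanSpace ℝ (Fin 3))) :=
    subset_affineSpan ℝ _ (by simp)
  -- angle sum in triangle A B D, vertex A
  have hsum1 : ∠ A D B + ∠ D B A + ∠ B A D = π :=
    EuclideanGeometry.angle_add_angle_add_angle_eq_pi B hAD.symm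
  have hADB_ABD : θ ≤ ∠ A D B + ∠ A B D := by
    have e1 : ∠ D B A = ∠ A B D := EuclideanGeometry.angle_comm D B A
    have e2 : ∠ B A D = ∠ D A B := EuclideanGeometry.angle_comm B A D
    linarith [hsum1, hDAB, e1 ▸ hsum1]
  -- angle sum in triangle B C D, vertex C
  have hsum2 : ∠ C B D + ∠ B D C + ∠ D C B = π :=
    EuclideanGeometry.angle_add_angle_add_angle_eq_pi D hBC
  have hDCB : ∠ D C B = ∠ B C D := EuclideanGeometry.angle_comm D C B
  have hφπ : ∠ B C D ≤ π := EuclideanGeometry.angle_le_pi B C D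
  have hCBD_nonneg := EuclideanGeometry.angle_nonneg C B D
  have hBDC_nonneg := EuclideanGeometry.angle_nonneg B D C
  have hCBD_le : ∠ C B D ≤ π - ∠ B C D := by linarith [hsum2, hDCB ▸ hsum2]
  have hBDC_le : ∠ B D C ≤ π - ∠ B C D := by linarith [hsum2, hDCB ▸ hsum2]
  -- heights
  have hH1 : Metric.infDist C (affineSpan ℝ ({A, B, D} : Set (EuclideanSpace ℝ (Fin 3))) :
      Set (EuclideanSpace ℝ (Fin 3))) ≤ Real.sin (∠ D B C) * dist B C :=
    infDist_le_sin_angle_mul _ C hBmem hDmem hBD.symm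
  have hH2 : Metric.infDist C (affineSpan ℝ ({A, B, D} : Set (EuclideanSpace ℝ (Fin 3))) :
      Set (EuclideanSpace ℝ (Fin 3))) ≤ Real.sin (∠ B D C) * dist D C :=
    infDist_le_sin_angle_mul _ C hDmem hBmem hBD
  -- sine monotonicity
  have hψθ : π - ∠ B C D < θ := by linarith
  have hψ0 : 0 ≤ π - ∠ B C D := by linarith
  have hs1 : Real.sin (∠ D B C) ≤ Real.sin (π - ∠ B C D) := by
    apply Real.sin_le_sin_of_le_of_le_pi_div_two
    · linarith [EuclideanGeometry.angle_nonneg D B C]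
    · linarith
    · rw [EuclideanGeometry.angle_comm D B C]; exact hCBD_le
  have hs2 : Real.sin (∠ B D C) ≤ Real.sin (π - ∠ B C D) := by
    apply Real.sin_le_sin_of_le_of_le_pi_div_two
    · linarith [EuclideanGeometry.angle_nonneg B D C]
    · linarith
    · exact hBDC_le
  have hsinθ : 0 < Real.sin θ := Real.sin_pos_of_pos_of_lt_pi hθ0 (by linarith)
  have hdAC : 0 < dist A C := dist_pos.2 hAC
  have hsinψθ : Real.sin (π - ∠ B C D) < Real.sin θ := by
    apply Real.strictMonoOn_sin ⟨by linarith, by linarith⟩ ⟨by linarith, le_of_lt hθ2⟩ hψθ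
  have hchain1 : Real.sin θ * dist A C ≤ Real.sin (π - ∠ B C D) * dist B C :=
    le_trans (le_trans hdist hH1) (mul_le_mul_of_nonneg_right hs1 dist_nonneg)
  have hchain2 : Real.sin θ * dist A C ≤ Real.sin (π - ∠ B C D) * dist D C :=
    le_trans (le_trans hdist hH2) (mul_le_mul_of_nonneg_right hs2 dist_nonneg)
  have hsψ : 0 < Real.sin (π - ∠ B C D) := by
    by_contra hcon
    push_neg at hcon
    nlinarith [dist_nonneg (x := B) (y := C), mul_pos hsinθ hdAC]
  have hBClt : dist A C < dist B C := by nlinarith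
  have hDClt : dist A C < dist D C := by nlinarith
  have hBCpos : 0 < dist B C := lt_trans hdAC hBClt
  have hDCpos : 0 < dist D C := lt_trans hdAC hDClt
  -- sine bounds at B and D
  have hsinABC : Real.sin (∠ A B C) * dist B C ≤ dist A C := sin_angle_point A B C
  have hsinADC : Real.sin (∠ A D C) * dist D C ≤ dist A C := sin_angle_point A D C
  -- the angles at B and D in triangles with A, C are acute
  have hABC_le : ∠ A B C ≤ π / 2 := by
    by_contra hcon
    push_neg at hcon
    have hcos : Real.cos (∠ A B C) < 0 :=
      Real.cos_neg_of_pi_div_two_lt_of_lt hcon (by linarith [EuclideanGeometry.angle_le_pi A B C])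
    have hlaw := EuclideanGeometry.law_cos A B C
    rw [dist_comm C B] at hlaw
    nlinarith [mul_nonneg (mul_nonneg (dist_nonneg (x := A) (y := B)) hBCpos.le)
      (neg_nonneg.2 hcos.le), mul_self_lt_mul_self hdAC.le hBClt]
  have hADC_le : ∠ A D C ≤ π / 2 := by
    by_contra hcon
    push_neg at hcon
    have hcos : Real.cos (∠ A D C) < 0 :=
      Real.cos_neg_of_pi_div_two_lt_of_lt hcon (by linarith [EuclideanGeometry.angle_le_pi A D C])
    have hlaw := EuclideanGeometry.law_cos A D C
    rw [dist_comm C D] at hlaw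
    nlinarith [mul_nonneg (mul_nonneg (dist_nonneg (x := A) (y := D)) hDCpos.le)
      (neg_nonneg.2 hcos.le), mul_self_lt_mul_self hdAC.le hDClt]
  -- Jordan's inequality
  have hJ1 : ∠ A B C ≤ π / 2 * Real.sin (∠ A B C) := by
    have h := Real.mul_le_sin (EuclideanGeometry.angle_nonneg A B C) hABC_le
    have h2 := mul_le_mul_of_nonneg_left h (by positivity : (0:ℝ) ≤ π / 2)
    calc ∠ A B C = π / 2 * (2 / π * ∠ A B C) := by field_simp
      _ ≤ π / 2 * Real.sin (∠ A B C) := h2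
  have hJ2 : ∠ A D C ≤ π / 2 * Real.sin (∠ A D C) := by
    have h := Real.mul_le_sin (EuclideanGeometry.angle_nonneg A D C) hADC_le
    have h2 := mul_le_mul_of_nonneg_left h (by positivity : (0:ℝ) ≤ π / 2)
    calc ∠ A D C = π / 2 * (2 / π * ∠ A D C) := by field_simp
      _ ≤ π / 2 * Real.sin (∠ A D C) := h2
  -- scaled sine bounds
  have hb1 : Real.sin θ * Real.sin (∠ A B C) ≤ Real.sin (π - ∠ B C D) := by
    have h1 : Real.sin θ * (Real.sin (∠ A B C) * dist B C) ≤ Real.sin θ * dist A C :=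
      mul_le_mul_of_nonneg_left hsinABC hsinθ.le
    nlinarith
  have hb2 : Real.sin θ * Real.sin (∠ A D C) ≤ Real.sin (π - ∠ B C D) := by
    have h1 : Real.sin θ * (Real.sin (∠ A D C) * dist D C) ≤ Real.sin θ * dist A C :=
      mul_le_mul_of_nonneg_left hsinADC hsinθ.le
    nlinarith
  -- angle triangle inequalities
  have ht1 : ∠ A D B ≤ ∠ A D C + ∠ C D B := angle_point_triangle A C B D
  have ht2 : ∠ A B D ≤ ∠ A B C + ∠ C B D := angle_point_triangle A C D B
  have hCDB : ∠ C D B = ∠ B D C := EuclideanGeometry.angle_comm C D B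
  -- combine: θ ≤ ∠ADC + ∠ABC + (π - φ)
  have hsum2' : ∠ C B D + ∠ B D C = π - ∠ B C D := by
    have := hDCB ▸ hsum2
    linarith
  have hmain : θ ≤ ∠ A D C + ∠ A B C + (π - ∠ B C D) := by
    linarith [hADB_ABD, ht1, ht2, hsum2', hCDB.le, hCDB.ge]
  -- final arithmetic
  have hsφ : Real.sin (π - ∠ B C D) = Real.sin (∠ B C D) := Real.sin_pi_sub (∠ B C D)
  have hsφ0 : 0 ≤ Real.sin (∠ B C D) := by rw [← hsφ]; exact hsψ.le
  have key : (θ - (2 * π - 2 * ∠ B C D)) * Real.sin θ ≤ 4 * Real.sin (∠ B C D) := by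
    have hm := mul_le_mul_of_nonneg_right hmain hsinθ.le
    -- θ sinθ ≤ (∠ADC + ∠ABC) sinθ + (π - φ) sinθ
    have hJb1 : ∠ A B C * Real.sin θ ≤ π / 2 * Real.sin (∠ B C D) := by
      have := mul_le_mul_of_nonneg_right hJ1 hsinθ.le
      nlinarith [hb1]
    have hJb2 : ∠ A D C * Real.sin θ ≤ π / 2 * Real.sin (∠ B C D) := by
      have := mul_le_mul_of_nonneg_right hJ2 hsinθ.le
      nlinarith [hb2]
    nlinarith [Real.pi_le_four, mul_nonneg hψ0 hsinθ.le]
  have hfin : θ - (2 * π - 2 * ∠ B C D) ≤ 4 * Real.sin (∠ B C D) / Real.sin θ :=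
    (le_div_iff₀ hsinθ).2 key
  linarith
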